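/- arXiv:2203.04123 — 2 statements merged into one kernel-verified Lean document; each statement's English description precedes it below -/
import Mathlib

section
/- Let h = (h_1, ..., h_n) be polynomials in K[x_1,...,x_n, e_1,...,e_m] and let α ∈ K^n be a common zero of the polynomials h_i(x, 0,...,0). Assume the Jacobian matrix of (h_1(x,0,...,0),...,h_n(x,0,...,0)) with respect to x_1,...,x_n is invertible at α. Then there exists a unique vector v = (v_1,...,v_n) of formal power series in K[[e_1,...,e_m]] such that v(0,...,0) = α and h_i(v_1,...,v_n, e_1,...,e_m) = 0 in K[[e_1,...,e_m]] for all i = 1,...,n. -/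
open MvPowerSeries MvPolynomial

section TIdeal

variable {σ : Type*} {R : Type*} [CommRing R]

private lemma Finsupp.degree_add' (a b : σ →₀ ℕ) :
    Finsupp.degree (a + b) = Finsupp.degree a + Finsupp.degree b := by
  simp [Finsupp.degree_eq_weight_one, map_add]

/-- The ideal of power series whose coefficients of degree `< k` vanish. -/
private def tideal (σ : Type*) (R : Type*) [CommRing R] (k : ℕ) :
    Ideal (MvPowerSeries σ R) where
  carrier := {f | ∀ d : σ →₀ ℕ, Finsupp.degree d < k → MvPowerSeries.coeff (R := R) d f = 0}
  add_mem' := by intro a b ha hb d hd; simp [map_add, ha d hd, hb d hd]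
  zero_mem' := by intro d hd; simp
  smul_mem' := by
    classical
    intro c f hf d hd
    rw [smul_eq_mul, MvPowerSeries.coeff_mul]
    refine Finset.sum_eq_zero fun p hp => ?_
    rw [Finset.HasAntidiagonal.mem_antidiagonal] at hp
    have h2 : Finsupp.degree p.2 < k := by
      have := Finsupp.degree_add' p.1 p.2
      rw [hp] at this; omega
    rw [hf p.2 h2, mul_zero]

private lemma mem_tideal {k : ℕ} {f : MvPowerSeries σ R} :
    f ∈ tideal σ R k ↔ ∀ d : σ →₀ ℕ, Finsupp.degree d < k → MvPowerSeries.coeff (R := R) d f = 0 :=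
  Iff.rfl

private lemma tideal_mul_mem {a b : ℕ} {f g : MvPowerSeries σ R}
    (hf : f ∈ tideal σ R a) (hg : g ∈ tideal σ R b) : f * g ∈ tideal σ R (a + b) := by
  classical
  intro d hd
  rw [MvPowerSeries.coeff_mul]
  refine Finset.sum_eq_zero fun p hp => ?_
  rw [Finset.HasAntidiagonal.mem_antidiagonal] at hp
  have hdeg : Finsupp.degree p.1 + Finsupp.degree p.2 < a + b := by
    have := Finsupp.degree_add' p.1 p.2
    rw [hp] at this; omega
  rcases lt_or_ge (Finsupp.degree p.1) a with hlt | hge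
  · rw [hf p.1 hlt, zero_mul]
  · rw [hg p.2 (by omega), mul_zero]

private lemma tideal_antitone {a b : ℕ} (hab : a ≤ b) :
    tideal σ R b ≤ tideal σ R a := fun _ hf d hd => hf d (lt_of_lt_of_le hd hab)

private lemma tideal_sq {a : ℕ} : (tideal σ R a) ^ 2 ≤ tideal σ R (a + a) := by
  rw [pow_two]
  exact Ideal.mul_le.mpr fun f hf g hg => tideal_mul_mem hf hg

private lemma eq_zero_of_mem_tideal {f : MvPowerSeries σ R}
    (hf : ∀ k, f ∈ tideal σ R k) : f = 0 := by
  ext d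
  rw [map_zero]
  exact hf (Finsupp.degree d + 1) d (Nat.lt_succ_self _)

private lemma mem_tideal_one {f : MvPowerSeries σ R} :
    f ∈ tideal σ R 1 ↔ MvPowerSeries.constantCoeff (σ := σ) (R := R) f = 0 := by
  constructor
  · intro hf
    have := hf 0 (by simp)
    rwa [MvPowerSeries.coeff_zero_eq_constantCoeff] at this
  · intro hf d hd
    have hd0 : d = 0 := (Finsupp.degree_eq_zero_iff d).mp (by omega)
    rw [hd0, MvPowerSeries.coeff_zero_eq_constantCoeff]
    exact hf

end TIdeal

section Taylor

variable {σ : Type*} [Fintype σ] {K A : Type*} [CommRing K] [CommRing A] [Algebra K A]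

/-- First-order Taylor expansion modulo the square of an ideal. -/
private lemma taylor_mem (I : Ideal A) (a b : σ → A) (hb : ∀ j, b j ∈ I)
    (P : MvPolynomial σ K) :
    aeval (fun s => a s + b s) P - aeval a P
      - ∑ j, b j * aeval a (pderiv j P) ∈ I ^ 2 := by
  classical
  induction P using MvPolynomial.induction_on with
  | C c => simp
  | add p q hp hq =>
    have hm := Ideal.add_mem _ hp hq
    convert hm using 1
    simp only [map_add, mul_add, Finset.sum_add_distrib]
    ring
  | mul_X p i hp =>
    set A' := aeval (fun s => a s + b s) p with hA'
    set Ap := (aeval a p : A) with hAp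
    set S := ∑ j, b j * aeval a (pderiv j p) with hS
    have hSI : S ∈ I := Ideal.sum_mem _ fun j _ => Ideal.mul_mem_right _ _ (hb j)
    have hsum : ∑ j, b j * aeval a (pderiv j (p * MvPolynomial.X i))
        = S * a i + Ap * b i := by
      have hterm : ∀ j, b j * aeval a (pderiv j (p * MvPolynomial.X i))
          = b j * aeval a (pderiv j p) * a i + (if j = i then b j * Ap else 0) := by
        intro j
        by_cases hji : j = i
        · subst hji
          simp only [pderiv_mul, MvPolynomial.pderiv_X_self, mul_one, map_add, map_mul, aeval_X, if_true]
          ring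
        · simp only [pderiv_mul, MvPolynomial.pderiv_X_of_ne (Ne.symm hji), mul_zero, add_zero,
            map_mul, aeval_X, if_neg hji]
          ring
      rw [Finset.sum_congr rfl fun j _ => hterm j, Finset.sum_add_distrib,
        Finset.sum_ite_eq' Finset.univ i (fun j => b j * Ap)]
      simp only [Finset.mem_univ, if_true]
      rw [hS, Finset.sum_mul, mul_comm Ap (b i)]
    have hmem := Ideal.add_mem _ (Ideal.mul_mem_right (a i + b i) _ hp)
      (by rw [pow_two]; exact Ideal.mul_mem_mul hSI (hb i))
    have hgoal : aeval (fun s => a s + b s) (p * MvPolynomial.X i) - aeval a (p * MvPolynomial.X i)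
        - ∑ j, b j * aeval a (pderiv j (p * MvPolynomial.X i))
        = (A' - Ap - S) * (a i + b i) + S * b i := by
      rw [hsum, map_mul, map_mul, aeval_X, aeval_X, ← hA', ← hAp]
      ring
    rw [hgoal]
    exact hmem

/-- Congruence of evaluations modulo an ideal. -/
private lemma aeval_sub_mem (I : Ideal A) (a a' : σ → A) (h : ∀ s, a s - a' s ∈ I)
    (P : MvPolynomial σ K) : aeval a P - aeval a' P ∈ I := by
  have ht := taylor_mem I a' (fun s => a s - a' s) h P
  have he : (fun s => a' s + (a s - a' s)) = a := by funext s; ring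
  rw [he] at ht
  have h2 : aeval a P - aeval a' P
      = (aeval a P - aeval a' P - ∑ j, (a j - a' j) * aeval a' (pderiv j P))
        + ∑ j, (a j - a' j) * aeval a' (pderiv j P) := by ring
  rw [h2]
  exact Ideal.add_mem _ (Ideal.pow_le_self two_ne_zero ht)
    (Ideal.sum_mem _ fun j _ => Ideal.mul_mem_right _ _ (h j))

end Taylor

section Hensel

variable {K : Type*} [Field K] {n m : ℕ}

/-- The constant coefficient of `MvPowerSeries` as an algebra homomorphism. -/
private def ccAlg (σ K : Type*) [Field K] : MvPowerSeries σ K →ₐ[K] K :=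
  { MvPowerSeries.constantCoeff (σ := σ) (R := K) with
    commutes' := fun c => by
      simp [MvPowerSeries.algebraMap_apply] }

private lemma ccAlg_apply {σ : Type*} (f : MvPowerSeries σ K) :
    ccAlg σ K f = MvPowerSeries.constantCoeff (σ := σ) (R := K) f := rfl

/-- constant coefficient of an evaluation. -/
private lemma constantCoeff_aeval {v : Fin n → MvPowerSeries (Fin m) K} {α : Fin n → K}
    (hv : ∀ j, MvPowerSeries.constantCoeff (σ := Fin m) (R := K) (v j) = α j)
    (P : MvPolynomial (Fin n ⊕ Fin m) K) :
    MvPowerSeries.constantCoeff (σ := Fin m) (R := K)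
        (aeval (Sum.elim v (MvPowerSeries.X : Fin m → MvPowerSeries (Fin m) K)) P)
      = aeval (Sum.elim α (0 : Fin m → K)) P := by
  rw [← ccAlg_apply, MvPolynomial.comp_aeval_apply]
  have hfun : (fun i => (ccAlg (Fin m) K)
      (Sum.elim v (MvPowerSeries.X : Fin m → MvPowerSeries (Fin m) K) i))
      = Sum.elim α (0 : Fin m → K) := by
    funext s
    cases s with
    | inl j => simp only [Sum.elim_inl, ccAlg_apply, hv j]
    | inr s => simp only [Sum.elim_inr, ccAlg_apply, MvPowerSeries.constantCoeff_X, Pi.zero_apply]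
  rw [hfun]

/-- Collapsing a product of two scalar matrices applied to a vector of power series. -/
private lemma matrix_C_sum (A B : Matrix (Fin n) (Fin n) K) (hAB : A * B = 1)
    (g : Fin n → MvPowerSeries (Fin m) K) (i : Fin n) :
    ∑ j, MvPowerSeries.C (σ := Fin m) (R := K) (A i j)
      * ∑ l, MvPowerSeries.C (σ := Fin m) (R := K) (B j l) * g l = g i := by
  classical
  have h1 : ∀ j, MvPowerSeries.C (σ := Fin m) (R := K) (A i j)
      * ∑ l, MvPowerSeries.C (σ := Fin m) (R := K) (B j l) * g l
      = ∑ l, MvPowerSeries.C (σ := Fin m) (R := K) (A i j * B j l) * g l := by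
    intro j
    rw [Finset.mul_sum]
    exact Finset.sum_congr rfl fun l _ => by rw [map_mul]; ring
  rw [Finset.sum_congr rfl fun j _ => h1 j, Finset.sum_comm]
  have h2 : ∀ l, (∑ j, MvPowerSeries.C (σ := Fin m) (R := K) (A i j * B j l) * g l)
      = MvPowerSeries.C (σ := Fin m) (R := K) ((1 : Matrix (Fin n) (Fin n) K) i l) * g l := by
    intro l
    rw [← Finset.sum_mul, ← map_sum, ← Matrix.mul_apply, hAB]
  rw [Finset.sum_congr rfl fun l _ => h2 l,
    Finset.sum_congr rfl fun l _ => by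
      rw [Matrix.one_apply, apply_ite (MvPowerSeries.C (σ := Fin m) (R := K)), map_one, map_zero,
        ite_mul, one_mul, zero_mul],
    Finset.sum_ite_eq Finset.univ i g]
  simp

/-- Inverting a scalar matrix over power series preserves `tideal` membership. -/
private lemma invert_mem (A : Matrix (Fin n) (Fin n) K) (hA : IsUnit A.det)
    (k : ℕ) (u : Fin n → MvPowerSeries (Fin m) K)
    (hu : ∀ i, ∑ j, MvPowerSeries.C (σ := Fin m) (R := K) (A i j) * u j ∈ tideal (Fin m) K k) :
    ∀ j, u j ∈ tideal (Fin m) K k := by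
  classical
  intro j
  have key := matrix_C_sum A⁻¹ A (Matrix.nonsing_inv_mul A hA) u j
  rw [← key]
  exact Ideal.sum_mem _ fun i _ => Ideal.mul_mem_left _ _ (hu i)

/-- The key linearization step. -/
private lemma linearize
    (h : Fin n → MvPolynomial (Fin n ⊕ Fin m) K) (α : Fin n → K)
    (A : Matrix (Fin n) (Fin n) K)
    (hA : ∀ i j, A i j = aeval (Sum.elim α (0 : Fin m → K)) (pderiv (Sum.inl j) (h i)))
    (v w : Fin n → MvPowerSeries (Fin m) K)
    (hwc : ∀ j, MvPowerSeries.constantCoeff (σ := Fin m) (R := K) (w j) = α j)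
    (k : ℕ) (hk : 1 ≤ k)
    (hb : ∀ j, v j - w j ∈ tideal (Fin m) K k) (i : Fin n) :
    aeval (Sum.elim v (MvPowerSeries.X : Fin m → MvPowerSeries (Fin m) K)) (h i)
      - aeval (Sum.elim w (MvPowerSeries.X : Fin m → MvPowerSeries (Fin m) K)) (h i)
      - ∑ j, MvPowerSeries.C (σ := Fin m) (R := K) (A i j) * (v j - w j)
      ∈ tideal (Fin m) K (k + 1) := by
  classical
  set Ew : (Fin n ⊕ Fin m) → MvPowerSeries (Fin m) K := Sum.elim w MvPowerSeries.X with hEw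
  set b : (Fin n ⊕ Fin m) → MvPowerSeries (Fin m) K :=
    Sum.elim (fun j => v j - w j) 0 with hbdef
  have hbmem : ∀ s, b s ∈ tideal (Fin m) K k := by
    intro s; cases s with
    | inl j => exact hb j
    | inr s => exact Ideal.zero_mem _
  have hEv : (fun s => Ew s + b s)
      = Sum.elim v (MvPowerSeries.X : Fin m → MvPowerSeries (Fin m) K) := by
    funext s; cases s with
    | inl j => simp [hEw, hbdef]
    | inr s => simp [hEw, hbdef]
  have ht := taylor_mem (tideal (Fin m) K k) Ew b hbmem (h i)
  rw [hEv] at ht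
  have ht2 : aeval (Sum.elim v (MvPowerSeries.X : Fin m → MvPowerSeries (Fin m) K)) (h i)
      - aeval Ew (h i) - ∑ s, b s * aeval Ew (pderiv s (h i))
      ∈ tideal (Fin m) K (k + 1) := by
    refine tideal_antitone (by omega) (tideal_sq ht)
  have hsplit : ∑ s : Fin n ⊕ Fin m, b s * aeval Ew (pderiv s (h i))
      = ∑ j : Fin n, (v j - w j) * aeval Ew (pderiv (Sum.inl j) (h i)) := by
    rw [Fintype.sum_sum_type]
    simp [hbdef]
  rw [hsplit] at ht2
  have hder : ∀ j, (v j - w j) * aeval Ew (pderiv (Sum.inl j) (h i))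
      - MvPowerSeries.C (σ := Fin m) (R := K) (A i j) * (v j - w j) ∈ tideal (Fin m) K (k + 1) := by
    intro j
    have heps : aeval Ew (pderiv (Sum.inl j) (h i)) - MvPowerSeries.C (σ := Fin m) (R := K) (A i j)
        ∈ tideal (Fin m) K 1 := by
      rw [mem_tideal_one, map_sub, hEw, constantCoeff_aeval hwc,
        MvPowerSeries.constantCoeff_C, hA i j, sub_self]
    have hmm := tideal_mul_mem (hb j) heps
    have heq : (v j - w j) * (aeval Ew (pderiv (Sum.inl j) (h i))
        - MvPowerSeries.C (σ := Fin m) (R := K) (A i j))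
        = (v j - w j) * aeval Ew (pderiv (Sum.inl j) (h i))
          - MvPowerSeries.C (σ := Fin m) (R := K) (A i j) * (v j - w j) := by ring
    rwa [heq] at hmm
  have hsum2 : ∑ j : Fin n, (v j - w j) * aeval Ew (pderiv (Sum.inl j) (h i))
      - ∑ j, MvPowerSeries.C (σ := Fin m) (R := K) (A i j) * (v j - w j)
      ∈ tideal (Fin m) K (k + 1) := by
    rw [← Finset.sum_sub_distrib]
    exact Ideal.sum_mem _ fun j _ => hder j
  have hfin := Ideal.add_mem _ ht2 hsum2
  convert hfin using 1
  ring

/-- The Newton iteration sequence. -/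
private noncomputable def henselSeq (h : Fin n → MvPolynomial (Fin n ⊕ Fin m) K)
    (α : Fin n → K) (B : Matrix (Fin n) (Fin n) K) :
    ℕ → Fin n → MvPowerSeries (Fin m) K :=
  Nat.rec (fun j => MvPowerSeries.C (σ := Fin m) (R := K) (α j))
    (fun _k v => fun j => v j -
      ∑ i, MvPowerSeries.C (σ := Fin m) (R := K) (B j i) *
        aeval (Sum.elim v (MvPowerSeries.X : Fin m → MvPowerSeries (Fin m) K)) (h i))

private lemma henselSeq_zero (h : Fin n → MvPolynomial (Fin n ⊕ Fin m) K)
    (α : Fin n → K) (B : Matrix (Fin n) (Fin n) K) (j : Fin n) :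
    henselSeq h α B 0 j = MvPowerSeries.C (σ := Fin m) (R := K) (α j) := rfl

private lemma henselSeq_succ (h : Fin n → MvPolynomial (Fin n ⊕ Fin m) K)
    (α : Fin n → K) (B : Matrix (Fin n) (Fin n) K) (k : ℕ) (j : Fin n) :
    henselSeq h α B (k+1) j = henselSeq h α B k j -
      ∑ i, MvPowerSeries.C (σ := Fin m) (R := K) (B j i) *
        aeval (Sum.elim (henselSeq h α B k)
          (MvPowerSeries.X : Fin m → MvPowerSeries (Fin m) K)) (h i) := rfl

end Hensel

theorem stmt_1 {K : Type*} [Field K] {n m : ℕ}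
    (h : Fin n → MvPolynomial (Fin n ⊕ Fin m) K)
    (α : Fin n → K)
    (hroot : ∀ i, MvPolynomial.aeval (Sum.elim α (0 : Fin m → K)) (h i) = 0)
    (hjac : IsUnit (Matrix.det (Matrix.of fun i j =>
      MvPolynomial.aeval (Sum.elim α (0 : Fin m → K))
        (MvPolynomial.pderiv (Sum.inl j) (h i))))) :
    ∃! v : Fin n → MvPowerSeries (Fin m) K,
      (∀ i, MvPowerSeries.constantCoeff (v i) = α i) ∧
      (∀ i, MvPolynomial.aeval
        (Sum.elim v (MvPowerSeries.X : Fin m → MvPowerSeries (Fin m) K)) (h i) = 0) := by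
  classical
  set A : Matrix (Fin n) (Fin n) K := Matrix.of fun i j =>
    aeval (Sum.elim α (0 : Fin m → K)) (pderiv (Sum.inl j) (h i)) with hAdef
  have hA : ∀ i j, A i j = aeval (Sum.elim α (0 : Fin m → K)) (pderiv (Sum.inl j) (h i)) :=
    fun i j => rfl
  have hjac' : IsUnit A.det := hjac
  set B := A⁻¹ with hBdef
  set seq := henselSeq h α B with hseq
  -- invariants of the Newton sequence
  have hinv : ∀ k, (∀ j, MvPowerSeries.constantCoeff (σ := Fin m) (R := K) (seq k j) = α j) ∧
      (∀ i, aeval (Sum.elim (seq k) (MvPowerSeries.X : Fin m → MvPowerSeries (Fin m) K)) (h i)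
        ∈ tideal (Fin m) K (k + 1)) := by
    intro k
    induction k with
    | zero =>
      have hc0 : ∀ j, MvPowerSeries.constantCoeff (σ := Fin m) (R := K) (seq 0 j) = α j := by
        intro j
        rw [hseq, henselSeq_zero]
        exact MvPowerSeries.constantCoeff_C _
      refine ⟨hc0, fun i => ?_⟩
      rw [mem_tideal_one, constantCoeff_aeval hc0, hroot i]
    | succ k ih =>
      obtain ⟨ihc, ihg⟩ := ih
      set g : Fin n → MvPowerSeries (Fin m) K := fun i =>
        aeval (Sum.elim (seq k) (MvPowerSeries.X : Fin m → MvPowerSeries (Fin m) K)) (h i)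
        with hg
      set δ : Fin n → MvPowerSeries (Fin m) K := fun j =>
        - ∑ i, MvPowerSeries.C (σ := Fin m) (R := K) (B j i) * g i with hδ
      have hseqsucc : ∀ j, seq (k+1) j = seq k j + δ j := by
        intro j
        rw [hseq, henselSeq_succ, hδ, ← hseq, hg]
        ring
      have hδmem : ∀ j, δ j ∈ tideal (Fin m) K (k + 1) := by
        intro j
        rw [hδ]
        exact neg_mem (Ideal.sum_mem _ fun i _ => Ideal.mul_mem_left _ _ (ihg i))
      have hcc : ∀ j, MvPowerSeries.constantCoeff (σ := Fin m) (R := K) (seq (k+1) j) = α j := by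
        intro j
        rw [hseqsucc j, map_add, ihc j,
          mem_tideal_one.mp (tideal_antitone (by omega) (hδmem j)), add_zero]
      refine ⟨hcc, fun i => ?_⟩
      have hdiff : ∀ j, seq (k+1) j - seq k j ∈ tideal (Fin m) K (k + 1) := by
        intro j; rw [hseqsucc j, add_sub_cancel_left]; exact hδmem j
      have hlin := linearize h α A hA (seq (k+1)) (seq k) ihc (k+1) (by omega) hdiff i
      have hAδ : ∑ j, MvPowerSeries.C (σ := Fin m) (R := K) (A i j) * (seq (k+1) j - seq k j)
          = - g i := by
        have hd : ∀ j, seq (k+1) j - seq k j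
            = - ∑ l, MvPowerSeries.C (σ := Fin m) (R := K) (B j l) * g l := by
          intro j; rw [hseqsucc j, add_sub_cancel_left, hδ]
        rw [Finset.sum_congr rfl fun j _ => by rw [hd j]]
        simp only [mul_neg]
        rw [Finset.sum_neg_distrib, matrix_C_sum A B (Matrix.mul_nonsing_inv A hjac') g i]
      rw [hAδ] at hlin
      have heq : aeval (Sum.elim (seq (k+1))
          (MvPowerSeries.X : Fin m → MvPowerSeries (Fin m) K)) (h i)
          = (aeval (Sum.elim (seq (k+1))
              (MvPowerSeries.X : Fin m → MvPowerSeries (Fin m) K)) (h i)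
            - g i - (- g i)) := by ring
      rw [heq]
      exact hlin
  -- differences between successive terms are small
  have hstep : ∀ k j, seq (k+1) j - seq k j ∈ tideal (Fin m) K (k + 1) := by
    intro k j
    have hd : seq (k+1) j - seq k j = - ∑ i, MvPowerSeries.C (σ := Fin m) (R := K) (B j i) *
        aeval (Sum.elim (seq k) (MvPowerSeries.X : Fin m → MvPowerSeries (Fin m) K)) (h i) := by
      rw [hseq, henselSeq_succ, ← hseq]
      ring
    rw [hd]
    exact neg_mem (Ideal.sum_mem _ fun i _ =>
      Ideal.mul_mem_left _ _ ((hinv k).2 i))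
  have htel : ∀ k k', k ≤ k' → ∀ j, seq k' j - seq k j ∈ tideal (Fin m) K (k + 1) := by
    intro k k' hkk'
    induction k', hkk' using Nat.le_induction with
    | base => intro j; simp
    | succ k' hkk' ih =>
      intro j
      have h1 : seq (k'+1) j - seq k j
          = (seq (k'+1) j - seq k' j) + (seq k' j - seq k j) := by ring
      rw [h1]
      exact Ideal.add_mem _ (tideal_antitone (by omega) (hstep k' j)) (ih j)
  -- the limit power series
  set V : Fin n → MvPowerSeries (Fin m) K :=
    fun j d => MvPowerSeries.coeff (R := K) d (seq (Finsupp.degree d) j) with hV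
  have hVcoeff : ∀ j d, MvPowerSeries.coeff (R := K) d (V j)
      = MvPowerSeries.coeff (R := K) d (seq (Finsupp.degree d) j) := by
    intro j d
    rw [hV]
    rfl
  have hVk : ∀ k j, V j - seq k j ∈ tideal (Fin m) K (k + 1) := by
    intro k j d hd
    rw [map_sub, hVcoeff j d]
    have hdk : Finsupp.degree d ≤ k := by omega
    have hc := htel (Finsupp.degree d) k hdk j d (by omega)
    rw [map_sub] at hc
    rw [sub_eq_zero]
    exact (sub_eq_zero.mp hc).symm
  have hVc : ∀ j, MvPowerSeries.constantCoeff (σ := Fin m) (R := K) (V j) = α j := by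
    intro j
    rw [← MvPowerSeries.coeff_zero_eq_constantCoeff_apply, hVcoeff j 0]
    have : Finsupp.degree (0 : Fin m →₀ ℕ) = 0 := map_zero _
    rw [this, MvPowerSeries.coeff_zero_eq_constantCoeff_apply]
    exact (hinv 0).1 j
  have hVg : ∀ i, aeval
      (Sum.elim V (MvPowerSeries.X : Fin m → MvPowerSeries (Fin m) K)) (h i) = 0 := by
    intro i
    apply eq_zero_of_mem_tideal
    intro k
    cases k with
    | zero => intro d hd; omega
    | succ k =>
      have hc : ∀ s, Sum.elim V (MvPowerSeries.X : Fin m → MvPowerSeries (Fin m) K) s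
          - Sum.elim (seq k) (MvPowerSeries.X : Fin m → MvPowerSeries (Fin m) K) s
          ∈ tideal (Fin m) K (k + 1) := by
        intro s
        cases s with
        | inl j => exact hVk k j
        | inr s => simp
      have h1 := aeval_sub_mem (tideal (Fin m) K (k+1)) _ _ hc (h i)
      have h2 := (hinv k).2 i
      have h3 := Ideal.add_mem _ h1 h2
      rwa [sub_add_cancel] at h3
  -- uniqueness
  have huniq : ∀ v w : Fin n → MvPowerSeries (Fin m) K,
      ((∀ j, MvPowerSeries.constantCoeff (σ := Fin m) (R := K) (v j) = α j) ∧
        (∀ i, aeval (Sum.elim v (MvPowerSeries.X : Fin m → MvPowerSeries (Fin m) K))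
          (h i) = 0)) →
      ((∀ j, MvPowerSeries.constantCoeff (σ := Fin m) (R := K) (w j) = α j) ∧
        (∀ i, aeval (Sum.elim w (MvPowerSeries.X : Fin m → MvPowerSeries (Fin m) K))
          (h i) = 0)) → v = w := by
    intro v w hv hw
    have key : ∀ k j, v j - w j ∈ tideal (Fin m) K (k + 1) := by
      intro k
      induction k with
      | zero =>
        intro j
        rw [mem_tideal_one, map_sub, hv.1 j, hw.1 j, sub_self]
      | succ k ih =>
        have hlin : ∀ i, aeval (Sum.elim v
              (MvPowerSeries.X : Fin m → MvPowerSeries (Fin m) K)) (h i)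
            - aeval (Sum.elim w (MvPowerSeries.X : Fin m → MvPowerSeries (Fin m) K)) (h i)
            - ∑ j, MvPowerSeries.C (σ := Fin m) (R := K) (A i j) * (v j - w j)
            ∈ tideal (Fin m) K (k + 2) :=
          fun i => linearize h α A hA v w hw.1 (k+1) (by omega) ih i
        have hsum : ∀ i, ∑ j, MvPowerSeries.C (σ := Fin m) (R := K) (A i j) * (v j - w j)
            ∈ tideal (Fin m) K (k + 2) := by
          intro i
          have := hlin i
          rw [hv.2 i, hw.2 i] at this
          have h0 : (0 : MvPowerSeries (Fin m) K) - 0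
              - ∑ j, MvPowerSeries.C (σ := Fin m) (R := K) (A i j) * (v j - w j)
              = - ∑ j, MvPowerSeries.C (σ := Fin m) (R := K) (A i j) * (v j - w j) := by ring
          rw [h0] at this
          simpa using neg_mem this
        exact invert_mem A hjac' (k+2) (fun j => v j - w j) hsum
    funext j
    have : v j - w j = 0 := by
      apply eq_zero_of_mem_tideal
      intro k
      exact tideal_antitone (by omega) (key k j)
    exact sub_eq_zero.mp this
  exact ⟨V, ⟨hVc, hVg⟩, fun w hw => huniq w V hw ⟨hVc, hVg⟩⟩
end

section
/- Let K be a field of characteristic zero and let u_1,...,u_n ∈ K[x_1,...,x_n] be algebraically independent over K. Then there exists a point α ∈ K̄^n (K̄ an algebraic closure) such that the Jacobian matrix of the shifted system (u_1 - e_1 - u_1(α), ..., u_n - e_n - u_n(α)), with respect to (x_1,...,x_n) and after setting e_1 = ... = e_n = 0, is invertible at α; moreover α is a root of this shifted system with e = 0. Consequently the Hensel lifting hypothesis can always be satisfied after a generic shift. -/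
open MvPolynomial

lemma aux_not_ai {K : Type*} [Field K] {n : ℕ}
    (v : Option (Fin n) → MvPolynomial (Fin n) K) :
    ¬ AlgebraicIndependent K v := by
  classical
  intro h
  rw [algebraicIndependent_iff_injective_aeval] at h
  set D := Finset.univ.sup (fun o : Option (Fin n) => (v o).totalDegree) with hDdef
  set c := (n+1) * D + 1 with hc
  set N := c ^ n with hN
  set M := (n+1) * N * D with hM
  set e : (Option (Fin n) → Fin (N+1)) → (Option (Fin n) →₀ ℕ) :=
    fun d => Finsupp.equivFunOnFinite.symm (fun o => (d o : ℕ)) with he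
  have hei : Function.Injective e := by
    intro a b hab
    funext o
    have := congrArg (fun f => f o) (Finsupp.equivFunOnFinite.symm.injective hab)
    exact Fin.ext this
  have hwli : LinearIndependent K (fun d : Option (Fin n) → Fin (N+1) =>
      aeval v (monomial (e d) (1:K))) := by
    have h1 : LinearIndependent K (fun d => (monomial (e d) (1:K) : MvPolynomial (Option (Fin n)) K)) := by
      have := (MvPolynomial.basisMonomials (Option (Fin n)) K).linearIndependent.comp e hei
      simpa [MvPolynomial.coe_basisMonomials, Function.comp_def] using this
    exact LinearIndependent.map' h1 (aeval v).toLinearMap (LinearMap.ker_eq_bot.mpr h)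
  set T : Finset (MvPolynomial (Fin n) K) :=
    Finset.image (fun d : Fin n → Fin (M+1) =>
      (monomial (Finsupp.equivFunOnFinite.symm fun i => (d i : ℕ)) (1:K) : MvPolynomial (Fin n) K))
      Finset.univ with hT
  -- every polynomial of total degree ≤ M lies in the span of T
  have hspanT : ∀ p : MvPolynomial (Fin n) K, p.totalDegree ≤ M →
      p ∈ Submodule.span K (T : Set (MvPolynomial (Fin n) K)) := by
    intro p hp
    rw [p.as_sum]
    refine Submodule.sum_mem _ (fun s hs => ?_)
    have hmono : (monomial s (coeff s p) : MvPolynomial (Fin n) K)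
        = (coeff s p) • monomial s 1 := by
      rw [MvPolynomial.smul_monomial, smul_eq_mul, mul_one]
    rw [hmono]
    refine Submodule.smul_mem _ _ (Submodule.subset_span ?_)
    have hsle : ∀ i, s i ≤ M := by
      intro i
      refine le_trans ?_ (le_trans (MvPolynomial.le_totalDegree hs) hp)
      by_cases h0 : s i = 0
      · omega
      · have : i ∈ s.support := Finsupp.mem_support_iff.mpr h0
        exact Finset.single_le_sum (f := fun i => s i) (fun _ _ => Nat.zero_le _) this
    have hss : (Finsupp.equivFunOnFinite.symm fun i =>
        (((fun i => (⟨s i, Nat.lt_succ_of_le (hsle i)⟩ : Fin (M+1))) i : Fin (M+1)) : ℕ)) = s := by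
      apply Finsupp.equivFunOnFinite.injective
      ext i
      simp
    refine Finset.mem_coe.mpr (Finset.mem_image.mpr ⟨fun i => ⟨s i, Nat.lt_succ_of_le (hsle i)⟩,
      Finset.mem_univ _, by rw [hss]⟩)
  have hdeg : ∀ d : Option (Fin n) → Fin (N+1),
      (aeval v (monomial (e d) (1:K))).totalDegree ≤ M := by
    intro d
    simp only [aeval_monomial, map_one, one_mul]
    rw [Finsupp.prod]
    refine le_trans (MvPolynomial.totalDegree_finset_prod _ _) ?_
    calc ∑ o ∈ (e d).support, ((v o) ^ ((e d) o)).totalDegree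
        ≤ ∑ o ∈ (e d).support, N * D := by
          refine Finset.sum_le_sum (fun o _ => ?_)
          refine le_trans (MvPolynomial.totalDegree_pow _ _) ?_
          have h1 : (e d) o ≤ N := by
            have : ((d o : ℕ)) < N + 1 := (d o).isLt
            simp only [he, Finsupp.coe_equivFunOnFinite_symm]
            omega
          exact Nat.mul_le_mul h1 (Finset.le_sup (f := fun o => (v o).totalDegree) (Finset.mem_univ o))
      _ ≤ (n+1) * (N * D) := by
          refine le_trans (Finset.sum_le_card_nsmul _ _ _ (fun o _ => le_rfl)) ?_
          simp only [smul_eq_mul]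
          have : (e d).support.card ≤ n + 1 := by
            have := Finset.card_le_univ (e d).support
            simpa using this
          exact Nat.mul_le_mul_right _ this
      _ = M := by rw [hM, Nat.mul_assoc]
  have hsub : Set.range (fun d : Option (Fin n) → Fin (N+1) =>
      aeval v (monomial (e d) (1:K))) ≤ Submodule.span K (T : Set (MvPolynomial (Fin n) K)) := by
    rintro _ ⟨d, rfl⟩
    exact hspanT _ (hdeg d)
  have hcard := linearIndependent_le_span' _ hwli _ hsub
  rw [Cardinal.mk_fintype, Fintype.card_fun] at hcard
  have hcard2 : ((N+1) ^ (n+1) : ℕ) ≤ T.card := by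
    have h3 : Fintype.card (T : Set (MvPolynomial (Fin n) K)) = T.card := by
      simp [Fintype.card_coe]
    rw [h3] at hcard
    have h4 : Fintype.card (Fin (N+1)) ^ Fintype.card (Option (Fin n)) ≤ T.card := by
      exact_mod_cast hcard
    simpa using h4
  have hTle : T.card ≤ (M+1) ^ n := by
    refine le_trans (Finset.card_image_le) ?_
    simp [Fintype.card_fun]
  -- arithmetic contradiction
  have harith : (M+1) ^ n < (N+1) ^ (n+1) := by
    have h1 : M + 1 ≤ (N+1) * c := by
      have : (N+1) * c = (n+1) * N * D + (N + (n+1)*D + 1) := by ring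
      omega
    calc (M+1) ^ n ≤ ((N+1) * c) ^ n := Nat.pow_le_pow_left h1 n
      _ = (N+1)^n * N := by rw [mul_pow, hN]
      _ < (N+1)^n * (N+1) := by
          nlinarith [Nat.pow_pos (Nat.succ_pos N) (n := n)]
      _ = (N+1)^(n+1) := by ring
  omega

lemma aux_chain {K : Type*} [CommSemiring K] {n : ℕ} {σ : Type*} [Fintype σ] [DecidableEq σ]
    (f : σ → MvPolynomial (Fin n) K) (p : MvPolynomial σ K) (j : Fin n) :
    pderiv j (aeval f p) = ∑ m : σ, aeval f (pderiv m p) * pderiv j (f m) := by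
  induction p using MvPolynomial.induction_on with
  | C a => simp
  | add p q hp hq =>
      simp only [map_add, hp, hq, add_mul, ← Finset.sum_add_distrib]
  | mul_X p i hp =>
      simp only [map_mul, aeval_X, pderiv_mul, hp]
      simp only [pderiv_X, Pi.single_apply, apply_ite (aeval f), map_add, map_mul, map_one,
        map_zero, aeval_X, add_mul, Finset.sum_add_distrib, mul_ite, mul_one, mul_zero,
        ite_mul, zero_mul, Finset.sum_mul]
      rw [Finset.sum_ite_eq Finset.univ i (fun m => aeval f p * pderiv j (f m))]
      simp only [Finset.mem_univ, if_true]
      congr 1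
      apply Finset.sum_congr rfl
      intro m _
      ring

lemma aux_nzsd {A : Type*} [CommRing A] [IsDomain A] [CharZero A] : NoZeroSMulDivisors ℕ A :=
  ⟨fun {c x} h => by
    rw [nsmul_eq_mul, mul_eq_zero, Nat.cast_eq_zero] at h
    exact h⟩



set_option synthInstance.maxHeartbeats 400000 in
set_option maxHeartbeats 1600000 in
lemma aux_jac {K : Type*} [Field K] [CharZero K] {n : ℕ}
    (u : Fin n → MvPolynomial (Fin n) K) (hu : AlgebraicIndependent K u) :
    (Matrix.of fun i j => pderiv j (u i)).det ≠ 0 := by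
  classical
  haveI := aux_nzsd (A := Algebra.adjoin K (Set.range u))
  have halg : ∀ i : Fin n, IsAlgebraic (Algebra.adjoin K (Set.range u)) (X i : MvPolynomial (Fin n) K) := by
    intro i
    by_contra hT
    exact aux_not_ai _ ((hu.option_iff_transcendental (X i)).mpr hT)
  have key : ∀ i : Fin n, ∃ q : Polynomial (Algebra.adjoin K (Set.range u)),
      Polynomial.aeval (X i : MvPolynomial (Fin n) K) q = 0 ∧
      Polynomial.aeval (X i : MvPolynomial (Fin n) K) (Polynomial.derivative q) ≠ 0 := by
    intro i
    obtain ⟨q₀, hq₀, hq₀a⟩ := halg i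
    have hex : ∃ m, ∃ qq : Polynomial (Algebra.adjoin K (Set.range u)), qq ≠ 0 ∧
        Polynomial.aeval (X i : MvPolynomial (Fin n) K) qq = 0 ∧ qq.natDegree = m :=
      ⟨q₀.natDegree, q₀, hq₀, hq₀a, rfl⟩
    obtain ⟨q, hq, hqa, hqd⟩ := Nat.find_spec hex
    refine ⟨q, hqa, ?_⟩
    have hd0 : q.natDegree ≠ 0 := by
      intro h0
      obtain ⟨a, rfl⟩ := Polynomial.natDegree_eq_zero.mp h0
      rw [Polynomial.aeval_C] at hqa
      have ha : a = 0 := by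
        have h2 : (a : MvPolynomial (Fin n) K) = 0 := hqa
        exact_mod_cast h2
      exact hq (by rw [ha, map_zero])
    have hder : Polynomial.derivative q ≠ 0 := fun h =>
      hd0 (Polynomial.natDegree_eq_zero_of_derivative_eq_zero h)
    intro hcon
    exact Nat.find_min hex (hqd ▸ Polynomial.natDegree_derivative_lt hd0)
      ⟨Polynomial.derivative q, hder, hcon, rfl⟩
  choose q hqa hqd using key
  have identity : ∀ (i j : Fin n) (qq : Polynomial (Algebra.adjoin K (Set.range u))),
      pderiv j (Polynomial.aeval (X i : MvPolynomial (Fin n) K) qq)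
        = (∑ m, (qq.sum fun k a => aeval u (pderiv m (hu.repr a)) *
            (X i : MvPolynomial (Fin n) K) ^ k) * pderiv j (u m))
          + (if i = j then
              Polynomial.aeval (X i : MvPolynomial (Fin n) K) (Polynomial.derivative qq)
            else 0) := by
    intro i j qq
    induction qq using Polynomial.induction_on' with
    | add p r hp hr =>
      have hsum : ∀ m : Fin n, (p + r).sum (fun k a =>
          aeval u (pderiv m (hu.repr a)) * (X i : MvPolynomial (Fin n) K) ^ k)
          = p.sum (fun k a => aeval u (pderiv m (hu.repr a)) * (X i : MvPolynomial (Fin n) K) ^ k)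
            + r.sum (fun k a => aeval u (pderiv m (hu.repr a)) * (X i : MvPolynomial (Fin n) K) ^ k) := by
        intro m
        refine Polynomial.sum_add_index p r _ (fun k => ?_) (fun k a b => ?_)
        · rw [map_zero, map_zero, map_zero, zero_mul]
        · rw [map_add, map_add, map_add, add_mul]
      simp only [map_add, hp, hr, hsum, add_mul, Finset.sum_add_distrib]
      by_cases hij : i = j <;> simp [hij] <;> ring
    | monomial k a =>
      have hcoe : (algebraMap (Algebra.adjoin K (Set.range u)) (MvPolynomial (Fin n) K)) a = aeval u (hu.repr a) :=
        (hu.aeval_repr a).symm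
      have hms : ∀ m : Fin n, (Polynomial.monomial k a).sum (fun k' a' =>
          aeval u (pderiv m (hu.repr a')) * (X i : MvPolynomial (Fin n) K) ^ k')
          = aeval u (pderiv m (hu.repr a)) * (X i : MvPolynomial (Fin n) K) ^ k := by
        intro m
        apply Polynomial.sum_monomial_index
        simp
      rw [Polynomial.aeval_monomial, pderiv_mul,
          Polynomial.derivative_monomial, Polynomial.aeval_monomial]
      simp only [hms, map_mul, map_natCast, pderiv_pow, pderiv_X, hcoe]
      rw [aux_chain, Finset.sum_mul]
      congr 1
      · exact Finset.sum_congr rfl fun m _ => by ring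
      · by_cases hij : i = j
        · subst hij
          rw [Pi.single_eq_same, if_pos rfl]
          ring
        · rw [Pi.single_eq_of_ne hij, if_neg hij]
          ring
  set c : Fin n → MvPolynomial (Fin n) K :=
    fun i => Polynomial.aeval (X i : MvPolynomial (Fin n) K) (Polynomial.derivative (q i)) with hc
  set V : Matrix (Fin n) (Fin n) (MvPolynomial (Fin n) K) :=
    Matrix.of (fun i m => (q i).sum fun k a =>
      aeval u (pderiv m (hu.repr a)) * (X i : MvPolynomial (Fin n) K) ^ k) with hV
  set J : Matrix (Fin n) (Fin n) (MvPolynomial (Fin n) K) :=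
    Matrix.of (fun m j => pderiv j (u m)) with hJ
  have hVJ : V * J = - (Matrix.diagonal c) := by
    apply Matrix.ext
    intro i j
    have hid := identity i j (q i)
    rw [hqa i, map_zero] at hid
    have h2 : (∑ m, V i m * J m j) + (if i = j then c i else 0) = 0 := by
      rw [hV, hJ, hc]
      simpa [Matrix.of_apply] using hid.symm
    rw [Matrix.mul_apply, Matrix.neg_apply, Matrix.diagonal_apply]
    exact eq_neg_of_add_eq_zero_left h2
  have hdet : V.det * J.det = (-1) ^ n * ∏ i, c i := by
    rw [← Matrix.det_mul, hVJ, Matrix.det_neg, Matrix.det_diagonal, Fintype.card_fin]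
  have hrhs : (-1 : MvPolynomial (Fin n) K) ^ n * ∏ i, c i ≠ 0 := by
    apply mul_ne_zero
    · exact pow_ne_zero _ (by norm_num)
    · exact Finset.prod_ne_zero_iff.mpr fun i _ => hqd i
  intro hJ0
  rw [hJ0, mul_zero] at hdet
  exact hrhs hdet.symm

theorem stmt_18 {K : Type*} [Field K] [CharZero K] {n : ℕ}
    (u : Fin n → MvPolynomial (Fin n) K)
    (hu : AlgebraicIndependent K u) :
    ∃ α : Fin n → AlgebraicClosure K,
      (∀ i, MvPolynomial.aeval α (u i) - MvPolynomial.aeval α (u i) = 0) ∧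
      IsUnit (Matrix.det (Matrix.of fun i j =>
        MvPolynomial.aeval α (MvPolynomial.pderiv j (u i)))) := by
  classical
  have hd := aux_jac u hu
  haveI : CharZero (AlgebraicClosure K) :=
    charZero_of_injective_algebraMap (algebraMap K (AlgebraicClosure K)).injective
  have hmap : MvPolynomial.map (algebraMap K (AlgebraicClosure K))
      ((Matrix.of fun i j => pderiv j (u i)).det) ≠ 0 := fun h =>
    hd (MvPolynomial.map_injective _ (algebraMap K (AlgebraicClosure K)).injective
      (by simpa using h))
  have hex : ∃ α : Fin n → AlgebraicClosure K,
      eval α (MvPolynomial.map (algebraMap K (AlgebraicClosure K))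
        ((Matrix.of fun i j => pderiv j (u i)).det)) ≠ 0 := by
    by_contra hcon
    push_neg at hcon
    exact hmap (MvPolynomial.funext fun x => by simpa using hcon x)
  obtain ⟨α, hα⟩ := hex
  refine ⟨α, fun i => sub_self _, ?_⟩
  rw [isUnit_iff_ne_zero]
  have hdet : (Matrix.of fun i j => aeval α (pderiv j (u i))).det
      = aeval α ((Matrix.of fun i j => pderiv j (u i)).det) := by
    exact (RingHom.map_det ((aeval α : MvPolynomial (Fin n) K →ₐ[K] AlgebraicClosure K) :
      MvPolynomial (Fin n) K →+* AlgebraicClosure K)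
      (Matrix.of fun i j => pderiv j (u i))).symm
  rw [hdet, MvPolynomial.aeval_def, ← MvPolynomial.eval_map]
  exact hα
end
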